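/- Let L ∈ GL(d,ℤ) be an Anosov automorphism, and let f be a C^∞ Anosov diffeomorphism of 𝕋^d homotopic to L that is conjugate to L by a conjugacy h which is a C¹ diffeomorphism. Then for every ε > 0 there exist a C^∞ diffeomorphism h̃ of 𝕋^d and a C^∞ Anosov diffeomorphism f̃ of 𝕋^d homotopic to L such that h̃ conjugates f to f̃ and the lift F̃ of f̃ satisfies sup_x (‖F̃(x) − Lx‖ + ‖DF̃(x) − L‖) < ε. -/

import Mathlib

set_option maxHeartbeats 1000000
set_option synthInstance.maxHeartbeats 200000


noncomputable section

/-- The ambient Euclidean space `ℝ^d`. -/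
abbrev Vd (d : ℕ) := EuclideanSpace ℝ (Fin d)

/-- The inclusion `ℤ^d → ℝ^d` of integer vectors. -/
def intVec {d : ℕ} (mv : Fin d → ℤ) : Vd d :=
  (EuclideanSpace.equiv (Fin d) ℝ).symm (fun i => (mv i : ℝ))

/-- The linear action of an integer matrix on `ℝ^d`. -/
def LmapR {d : ℕ} (L : Matrix (Fin d) (Fin d) ℤ) : Vd d → Vd d :=
  fun x => Matrix.toEuclideanLin (L.map (Int.cast : ℤ → ℝ)) x

/-- The linear action of an integer matrix on `ℝ^d`, as a continuous linear map. -/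
def LCLM {d : ℕ} (L : Matrix (Fin d) (Fin d) ℤ) : Vd d →L[ℝ] Vd d :=
  Matrix.toEuclideanCLM (𝕜 := ℝ) (L.map (Int.cast : ℤ → ℝ))

/-- The multiset of moduli of the complex eigenvalues of a real matrix,
with algebraic multiplicity. -/
def eigModuli {d : ℕ} (B : Matrix (Fin d) (Fin d) ℝ) : Multiset ℝ :=
  ((B.map (algebraMap ℝ ℂ)).charpoly.roots).map (fun z => ‖z‖)

/-- `L ∈ GL(d,ℤ)` is an Anosov (hyperbolic) automorphism of `𝕋^d`:
`det L = ±1` and `L` has no complex eigenvalue of modulus `1`. -/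
def IsAnosovAuto {d : ℕ} (L : Matrix (Fin d) (Fin d) ℤ) : Prop :=
  IsUnit L.det ∧ ∀ r ∈ eigModuli (L.map (Int.cast : ℤ → ℝ)), r ≠ 1

/-- `F : ℝ^d → ℝ^d` is a lift of a torus map homotopic to `L`:
`F(x + m) = F(x) + Lm` for all integer vectors `m`. -/
def IsLiftOf {d : ℕ} (F : Vd d → Vd d) (L : Matrix (Fin d) (Fin d) ℤ) : Prop :=
  ∀ x : Vd d, ∀ mv : Fin d → ℤ, F (x + intVec mv) = F x + intVec (L.mulVec mv)

/-- `F` is a `C^r` diffeomorphism of `ℝ^d`. -/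
def IsCrDiffeo {d : ℕ} (r : ℕ∞) (F : Vd d → Vd d) : Prop :=
  ContDiff ℝ r F ∧ Function.Bijective F ∧ ContDiff ℝ r (Function.invFun F)

/-- The iterated derivative cocycle `D_xF^n = DF(F^{n-1}x) ⋯ DF(x)`. -/
def DIter {d : ℕ} (F : Vd d → Vd d) : ℕ → Vd d → (Vd d →L[ℝ] Vd d)
  | 0, _ => ContinuousLinearMap.id ℝ (Vd d)
  | n + 1, x => (DIter F n (F x)).comp (fderiv ℝ F x)

/-- `x` is (a lift of) a periodic point of period `n`: `F^n(x) - x ∈ ℤ^d`. -/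
def IsPeriodicPt {d : ℕ} (F : Vd d → Vd d) (n : ℕ) (x : Vd d) : Prop :=
  ∃ mv : Fin d → ℤ, F^[n] x = x + intVec mv

/-- `Es, Eu` witness that (the lift) `F` is Anosov: a continuous `ℤ^d`-periodic
`DF`-invariant splitting `ℝ^d = E^s(x) ⊕ E^u(x)` with uniform contraction on `E^s`
and uniform expansion on `E^u`. -/
def AnosovData {d : ℕ} (F : Vd d → Vd d) (Es Eu : Vd d → Submodule ℝ (Vd d)) : Prop :=
  (∀ x, Es x ⊓ Eu x = ⊥) ∧ (∀ x, Es x ⊔ Eu x = ⊤) ∧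
  (∀ x : Vd d, ∀ mv : Fin d → ℤ, Es (x + intVec mv) = Es x ∧ Eu (x + intVec mv) = Eu x) ∧
  (∃ P : Vd d → Vd d →L[ℝ] Vd d, Continuous P ∧
    (∀ x, ∀ v ∈ Es x, P x v = v) ∧ (∀ x, ∀ v ∈ Eu x, P x v = 0)) ∧
  (∀ x, (Es x).map (fderiv ℝ F x).toLinearMap = Es (F x)) ∧
  (∀ x, (Eu x).map (fderiv ℝ F x).toLinearMap = Eu (F x)) ∧
  ∃ C : ℝ, 0 < C ∧ ∃ μ : ℝ, μ ∈ Set.Ioo (0 : ℝ) 1 ∧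
    ∀ x : Vd d, ∀ n : ℕ,
      (∀ v ∈ Es x, ‖DIter F n x v‖ ≤ C * μ ^ n * ‖v‖) ∧
      (∀ v ∈ Eu x, ‖v‖ ≤ C * μ ^ n * ‖DIter F n x v‖)

/-- `F` is (the lift of) an Anosov diffeomorphism. -/
def IsAnosovLift {d : ℕ} (F : Vd d → Vd d) : Prop :=
  ∃ Es Eu : Vd d → Submodule ℝ (Vd d), AnosovData F Es Eu

/-- `H` is (the lift of) a conjugacy between the torus maps with lifts `F` and `G`:
`H` is a homeomorphism of `ℝ^d` commuting with integer translations
(i.e. `H = id + v` with `v` continuous and `ℤ^d`-periodic) with `H ∘ F = G ∘ H`. -/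
def IsConjugacyLift {d : ℕ} (H F G : Vd d → Vd d) : Prop :=
  Continuous H ∧ Function.Bijective H ∧ Continuous (Function.invFun H) ∧
  (∀ x : Vd d, ∀ mv : Fin d → ℤ, H (x + intVec mv) = H x + intVec mv) ∧
  ∀ x, H (F x) = G (H x)

/-- `f` and `g` (with lifts `F`, `G`) have the same periodic data with respect to the
conjugacy `H`: for every periodic point `x` of period `n`, `D_xF^n` is conjugate in
`GL(d,ℝ)` to `D_{H(x)}G^n`. -/
def SamePeriodicData {d : ℕ} (F G H : Vd d → Vd d) : Prop :=
  ∀ x : Vd d, ∀ n : ℕ, 0 < n → IsPeriodicPt F n x →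
    ∃ S : Vd d ≃ₗ[ℝ] Vd d, ∀ v, DIter F n x (S v) = S (DIter G n (H x) v)

/-- `f` (with lift `F`) has the same periodic data as `L`: for every periodic point `x`
of period `n`, `D_xF^n` is conjugate in `GL(d,ℝ)` to `L^n`. -/
def SamePeriodicDataAsAuto {d : ℕ} (F : Vd d → Vd d) (L : Matrix (Fin d) (Fin d) ℤ) : Prop :=
  ∀ x : Vd d, ∀ n : ℕ, 0 < n → IsPeriodicPt F n x →
    ∃ S : Vd d ≃ₗ[ℝ] Vd d, ∀ v,
      DIter F n x (S v) = S (Matrix.toEuclideanLin ((L.map (Int.cast : ℤ → ℝ)) ^ n) v)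

/-- `H` is (the lift of) a `C^{1+Hölder}` diffeomorphism: a `C¹` diffeomorphism whose
derivative is `α`-Hölder for some `α > 0`. -/
def IsC1HolderDiffeo {d : ℕ} (H : Vd d → Vd d) : Prop :=
  ContDiff ℝ 1 H ∧ Function.Bijective H ∧ ContDiff ℝ 1 (Function.invFun H) ∧
  ∃ α : ℝ, 0 < α ∧ ∃ C : ℝ, 0 < C ∧ ∀ x y : Vd d,
    ‖fderiv ℝ H x - fderiv ℝ H y‖ ≤ C * ‖x - y‖ ^ α


namespace Aux

variable {d : ℕ}

lemma intVec_apply (mv : Fin d → ℤ) (i : Fin d) : intVec mv i = (mv i : ℝ) := rfl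

lemma exists_reduce (x : Vd d) : ∃ mv : Fin d → ℤ, ‖x + intVec mv‖ ≤ (d : ℝ) := by
  refine ⟨fun i => -⌊x i⌋, ?_⟩
  have hco : ∀ i, |(x + intVec (fun i => -⌊x i⌋)) i| ≤ 1 := by
    intro i
    have : (x + intVec (fun i => -⌊x i⌋)) i = x i - ⌊x i⌋ := by
      have h0 : (intVec (fun i => -⌊x i⌋)) i = ((-⌊x i⌋ : ℤ) : ℝ) := rfl
      have h1 : (x + intVec (fun i => -⌊x i⌋)) i = x i + (intVec (fun i => -⌊x i⌋)) i := rfl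
      rw [h1, h0]
      push_cast
      ring
    rw [this]
    have h1 : ((⌊x i⌋ : ℝ)) ≤ x i := Int.floor_le _
    have h2 : x i < (⌊x i⌋ : ℝ) + 1 := Int.lt_floor_add_one _
    rw [abs_le]
    constructor <;> linarith
  have := EuclideanSpace.norm_eq (x + intVec (fun i => -⌊x i⌋))
  rw [this]
  have hsum : (∑ i, ‖(x + intVec (fun i => -⌊x i⌋)) i‖ ^ 2) ≤ (d : ℝ) := by
    calc (∑ i, ‖(x + intVec (fun i => -⌊x i⌋)) i‖ ^ 2) ≤ ∑ _i : Fin d, (1:ℝ) := by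
          apply Finset.sum_le_sum
          intro i _
          have := hco i
          have h0 : ‖(x + intVec (fun i => -⌊x i⌋)) i‖ = |(x + intVec (fun i => -⌊x i⌋)) i| := rfl
          rw [h0]
          nlinarith [abs_nonneg ((x + intVec (fun i => -⌊x i⌋)) i)]
      _ = (d : ℝ) := by simp
  calc Real.sqrt (∑ i, ‖(x + intVec (fun i => -⌊x i⌋)) i‖ ^ 2) ≤ Real.sqrt ((d:ℝ)^2) := by
        apply Real.sqrt_le_sqrt
        have hd2 : (d:ℝ) ≤ (d:ℝ)^2 := by
          rcases Nat.eq_zero_or_pos d with h|h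
          · simp [h]
          · have : (1:ℝ) ≤ (d:ℝ) := by exact_mod_cast h
            nlinarith
        linarith
    _ = (d : ℝ) := Real.sqrt_sq (by positivity)

variable {E : Type*} [NormedAddCommGroup E]

/-- A continuous ℤ^d-periodic function is bounded. -/
lemma per_bounded (g : Vd d → E) (hg : Continuous g)
    (hper : ∀ x mv, g (x + intVec mv) = g x) : ∃ M : ℝ, 1 ≤ M ∧ ∀ x, ‖g x‖ ≤ M := by
  obtain ⟨C, hC⟩ := (isCompact_closedBall (0 : Vd d) d).exists_bound_of_continuousOn
    hg.continuousOn
  refine ⟨max C 1, le_max_right _ _, fun x => ?_⟩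
  obtain ⟨mv, hmv⟩ := exists_reduce x
  have : g x = g (x + intVec mv) := (hper x mv).symm
  rw [this]
  exact le_trans (hC _ (by simpa [Metric.mem_closedBall, dist_eq_norm] using hmv)) (le_max_left _ _)

/-- A continuous ℤ^d-periodic function is uniformly continuous (ε-δ form). -/
lemma per_unifCont (g : Vd d → E) (hg : Continuous g)
    (hper : ∀ x mv, g (x + intVec mv) = g x) (ρ : ℝ) (hρ : 0 < ρ) :
    ∃ δ : ℝ, 0 < δ ∧ ∀ x y : Vd d, ‖x - y‖ ≤ δ → ‖g x - g y‖ ≤ ρ := by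
  have hK : IsCompact (Metric.closedBall (0 : Vd d) (d + 1)) := isCompact_closedBall _ _
  have huc := hK.uniformContinuousOn_of_continuous hg.continuousOn
  rw [Metric.uniformContinuousOn_iff] at huc
  obtain ⟨δ₀, hδ₀, hd⟩ := huc ρ hρ
  refine ⟨min (δ₀ / 2) 1, by positivity, fun x y hxy => ?_⟩
  obtain ⟨mv, hmv⟩ := exists_reduce x
  have hx' : x + intVec mv ∈ Metric.closedBall (0 : Vd d) (d + 1) := by
    simp only [Metric.mem_closedBall, dist_eq_norm, sub_zero]
    linarith
  have hy' : y + intVec mv ∈ Metric.closedBall (0 : Vd d) (d + 1) := by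
    simp only [Metric.mem_closedBall, dist_eq_norm, sub_zero]
    have : ‖y + intVec mv‖ ≤ ‖x + intVec mv‖ + ‖y - x‖ := by
      have : y + intVec mv = (x + intVec mv) + (y - x) := by abel
      rw [this]; exact norm_add_le _ _
    have h1 : ‖y - x‖ ≤ 1 := le_trans (by rwa [norm_sub_rev] at hxy ⊢) (min_le_right _ _)
    linarith
  have hdist : dist (x + intVec mv) (y + intVec mv) < δ₀ := by
    rw [dist_eq_norm]
    have : x + intVec mv - (y + intVec mv) = x - y := by abel
    rw [this]
    calc ‖x - y‖ ≤ min (δ₀ / 2) 1 := hxy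
      _ ≤ δ₀ / 2 := min_le_left _ _
      _ < δ₀ := by linarith
  have := hd _ hx' _ hy' hdist
  rw [dist_eq_norm, hper, hper] at this
  exact this.le

end Aux

namespace Aux
variable {d : ℕ}

/-- fderiv of a translation-equivariant map is periodic. -/
lemma fderiv_equivariant {G : Vd d → Vd d} (hG : Differentiable ℝ G) (c c' : Vd d)
    (h : ∀ y, G (y + c) = G y + c') (x : Vd d) :
    fderiv ℝ G (x + c) = fderiv ℝ G x := by
  have h1 : HasFDerivAt (fun y => G (y + c)) (fderiv ℝ G (x + c)) x := by
    have := ((hG (x + c)).hasFDerivAt).comp x ((hasFDerivAt_id x).add_const c)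
    simpa [Function.comp_def] using this
  have h2 : HasFDerivAt (fun y => G (y + c)) (fderiv ℝ G x) x := by
    have : (fun y => G (y + c)) = fun y => G y + c' := funext h
    rw [this]
    exact (hG x).hasFDerivAt.add_const c'
  exact h1.unique h2

lemma lip_of_bound {G : Vd d → Vd d} (hG : Differentiable ℝ G) (C : ℝ)
    (hC : ∀ x, ‖fderiv ℝ G x‖ ≤ C) (x y : Vd d) : ‖G x - G y‖ ≤ C * ‖x - y‖ := by
  exact Convex.norm_image_sub_le_of_norm_fderiv_le (𝕜 := ℝ) (fun t _ => hG t)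
    (fun t _ => hC t) convex_univ (Set.mem_univ y) (Set.mem_univ x)

lemma invFun_equivariant {G : Vd d → Vd d} (hbij : Function.Bijective G)
    (h : ∀ x mv, G (x + intVec mv) = G x + intVec mv) (y : Vd d) (mv : Fin d → ℤ) :
    Function.invFun G (y + intVec mv) = Function.invFun G y + intVec mv := by
  apply hbij.injective
  rw [Function.rightInverse_invFun hbij.surjective _, h,
    Function.rightInverse_invFun hbij.surjective _]

/-- Package: inverse of a smooth map with uniformly invertible derivative. -/
lemma inverse_package (G : Vd d → Vd d) (hG : ContDiff ℝ ((⊤:ℕ∞) : ℕ∞) G)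
    (hbij : Function.Bijective G) (c : ℝ) (hc : 0 < c)
    (hlowD : ∀ t u, c * ‖u‖ ≤ ‖fderiv ℝ G t u‖) :
    ContDiff ℝ ((⊤:ℕ∞) : ℕ∞) (Function.invFun G) ∧
    (∀ t, (fderiv ℝ (Function.invFun G) (G t)).comp (fderiv ℝ G t)
        = ContinuousLinearMap.id ℝ (Vd d)) ∧
    (∀ t, (fderiv ℝ G t).comp (fderiv ℝ (Function.invFun G) (G t))
        = ContinuousLinearMap.id ℝ (Vd d)) ∧
    (∀ z, ‖fderiv ℝ (Function.invFun G) z‖ ≤ 1 / c) := by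
  have hdiff : Differentiable ℝ G := hG.differentiable (by simp)
  have hEinj : ∀ t, Function.Injective (fderiv ℝ G t) := by
    intro t u u' huu
    have h0 : fderiv ℝ G t (u - u') = 0 := by rw [map_sub, huu, sub_self]
    have h1 := hlowD t (u - u')
    rw [h0, norm_zero] at h1
    have h2 : ‖u - u'‖ ≤ 0 := by nlinarith [norm_nonneg (u - u')]
    have h3 : u - u' = 0 := by
      have := norm_nonneg (u - u'); rw [← norm_eq_zero]; linarith
    exact sub_eq_zero.mp h3
  have hE : ∀ t, ∃ e : Vd d ≃L[ℝ] Vd d, (e : Vd d →L[ℝ] Vd d) = fderiv ℝ G t := by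
    intro t
    have hinj : Function.Injective (fderiv ℝ G t).toLinearMap := hEinj t
    have hsurj : Function.Surjective (fderiv ℝ G t).toLinearMap :=
      (LinearMap.injective_iff_surjective).mp hinj
    refine ⟨(LinearEquiv.ofBijective (fderiv ℝ G t).toLinearMap
      ⟨hinj, hsurj⟩).toContinuousLinearEquiv, ?_⟩
    ext v; rfl
  choose E hEeq using hE
  set Gi := Function.invFun G with hGidef
  have hri : Function.RightInverse Gi G := Function.rightInverse_invFun hbij.surjective
  have hli : Function.LeftInverse Gi G := Function.leftInverse_invFun hbij.injective
  have hn1 : (1 : WithTop ℕ∞) ≤ ((⊤:ℕ∞) : WithTop ℕ∞) := by exact_mod_cast le_top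
  have key : ∀ a : Vd d, ContDiffAt ℝ ((⊤:ℕ∞) : ℕ∞) Gi (G a) ∧
      HasFDerivAt Gi ((E a).symm : Vd d →L[ℝ] Vd d) (G a) := by
    intro a
    have hca : ContDiffAt ℝ ((⊤:ℕ∞) : ℕ∞) G a := hG.contDiffAt
    have hder : HasFDerivAt G ((E a : Vd d →L[ℝ] Vd d)) a := by
      rw [hEeq]; exact (hdiff a).hasFDerivAt
    have hsf : HasStrictFDerivAt G ((E a : Vd d →L[ℝ] Vd d)) a :=
      hca.hasStrictFDerivAt' hder (by simp)
    have hueq : ∀ᶠ y in nhds (G a), Gi y = hsf.localInverse G (E a) a y :=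
      hsf.localInverse_unique (Filter.Eventually.of_forall fun x => hli x)
    constructor
    · exact (hca.to_localInverse hder (by simp)).congr_of_eventuallyEq hueq
    · exact (hsf.to_localInverse.hasFDerivAt).congr_of_eventuallyEq hueq
  have hfd : ∀ t, fderiv ℝ Gi (G t) = ((E t).symm : Vd d →L[ℝ] Vd d) := fun t =>
    (key t).2.fderiv
  refine ⟨?_, ?_, ?_, ?_⟩
  · rw [contDiff_iff_contDiffAt]
    intro z
    obtain ⟨t, rfl⟩ := hbij.surjective z
    exact (key t).1
  · intro t
    rw [hfd t, ← hEeq t]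
    ext v
    simp
  · intro t
    rw [hfd t, ← hEeq t]
    ext v
    simp
  · intro z
    obtain ⟨t, rfl⟩ := hbij.surjective z
    rw [hfd t]
    refine ContinuousLinearMap.opNorm_le_bound _ (by positivity) (fun u => ?_)
    have h1 := hlowD t ((E t).symm u)
    rw [← hEeq t] at h1
    simp only [ContinuousLinearEquiv.coe_coe, ContinuousLinearEquiv.apply_symm_apply] at h1
    rw [div_mul_eq_mul_div, le_div_iff₀ hc, mul_comm]
    calc c * ‖((E t).symm : Vd d →L[ℝ] Vd d) u‖ ≤ ‖u‖ := by simpa using h1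
      _ ≤ 1 * ‖u‖ := by simp

end Aux

namespace Aux
open MeasureTheory
variable {d : ℕ}

lemma conv_close {E' : Type*} [NormedAddCommGroup E'] [NormedSpace ℝ E'] [CompleteSpace E']
    (ψ : ContDiffBump (0 : Vd d)) (G : Vd d → E') (hG : Continuous G) (x : Vd d)
    (ρ : ℝ) (hρ : 0 ≤ ρ) (h : ∀ t : Vd d, ‖t‖ < ψ.rOut → ‖G (x - t) - G x‖ ≤ ρ) :
    ‖(∫ t, ψ.normed volume t • G (x - t)) - G x‖ ≤ ρ := by
  set φ := ψ.normed volume with hφ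
  have hφc : Continuous φ := ψ.continuous_normed
  have hint1 : Integrable (fun t => φ t • G (x - t)) := by
    apply Continuous.integrable_of_hasCompactSupport
    · exact hφc.smul (hG.comp (continuous_const.sub continuous_id))
    · exact (ψ.hasCompactSupport_normed).smul_right
  have hint2 : Integrable (fun t : Vd d => φ t • G x) :=
    (ψ.integrable_normed).smul_const _
  have heq : (∫ t, φ t • G (x - t)) - G x = ∫ t, φ t • (G (x - t) - G x) := by
    have : (fun t => φ t • (G (x - t) - G x)) = fun t => φ t • G (x - t) - φ t • G x := by
      funext t; rw [smul_sub]
    rw [this, integral_sub hint1 hint2, integral_smul_const, ψ.integral_normed, one_smul]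
  rw [heq]
  have hb : Integrable (fun t => φ t * ρ) := (ψ.integrable_normed).mul_const ρ
  refine le_trans (norm_integral_le_of_norm_le hb (Filter.Eventually.of_forall fun t => ?_)) ?_
  · rw [norm_smul, Real.norm_eq_abs, abs_of_nonneg (ψ.nonneg_normed t)]
    by_cases ht : φ t = 0
    · simp only [← hφ, ht, zero_mul]
      nlinarith [norm_nonneg (G (x - t) - G x)]
    · have htmem : t ∈ Function.support φ := ht
      rw [ψ.support_normed_eq] at htmem
      have : ‖t‖ < ψ.rOut := by simpa [Metric.mem_ball, dist_eq_norm] using htmem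
      exact mul_le_mul_of_nonneg_left (h t this) (ψ.nonneg_normed t)
  · rw [integral_mul_const, ψ.integral_normed, one_mul]

lemma exists_smooth_approx (u : Vd d → Vd d) (hu : ContDiff ℝ 1 u)
    (hper : ∀ x mv, u (x + intVec mv) = u x) (ρ : ℝ) (hρ : 0 < ρ) :
    ∃ s : Vd d → Vd d, ContDiff ℝ ((⊤:ℕ∞) : ℕ∞) s ∧ (∀ x mv, s (x + intVec mv) = s x) ∧
      ∀ x, ‖s x - u x‖ ≤ ρ ∧ ‖fderiv ℝ s x - fderiv ℝ u x‖ ≤ ρ := by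
  have hc : Continuous u := hu.continuous
  have hud : Differentiable ℝ u := hu.differentiable one_ne_zero
  have hdc : Continuous (fderiv ℝ u) := hu.continuous_fderiv one_ne_zero
  have hdper : ∀ x mv, fderiv ℝ u (x + intVec mv) = fderiv ℝ u x := by
    intro x mv
    exact fderiv_equivariant hud (intVec mv) 0 (fun y => by rw [hper, add_zero]) x
  obtain ⟨M, hM1, hM⟩ := per_bounded (fderiv ℝ u) hdc hdper
  obtain ⟨δ₁, hδ₁, hu1⟩ := per_unifCont u hc hper ρ hρ
  obtain ⟨δ₂, hδ₂, hu2⟩ := per_unifCont (fderiv ℝ u) hdc hdper ρ hρ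
  set δ := min δ₁ δ₂ with hδdef
  have hδ : 0 < δ := lt_min hδ₁ hδ₂
  set ψ : ContDiffBump (0 : Vd d) := ⟨δ/2, δ, by positivity, by linarith⟩ with hψdef
  set φ := ψ.normed volume with hφ
  have hφc : Continuous φ := ψ.continuous_normed
  set s₀ := convolution φ u (ContinuousLinearMap.lsmul ℝ ℝ) volume with hs₀
  have hval : ∀ x, s₀ x = ∫ t, φ t • u (x - t) := by
    intro x
    rw [hs₀, convolution_def]
    simp only [ContinuousLinearMap.lsmul_apply]
  have hsmooth : ContDiff ℝ ((⊤:ℕ∞) : ℕ∞) s₀ :=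
    HasCompactSupport.contDiff_convolution_left _ (ψ.hasCompactSupport_normed)
      (ψ.contDiff_normed (n := ⊤)) (hc.locallyIntegrable)
  have hder : ∀ x, HasFDerivAt s₀ (∫ t, φ t • fderiv ℝ u (x - t)) x := by
    intro x₀
    have h0 : (fun x => ∫ t, φ t • u (x - t)) = s₀ := by
      funext x; rw [hval x]
    rw [← h0]
    apply hasFDerivAt_integral_of_dominated_of_fderiv_le (s := Metric.ball x₀ 1)
      (F' := fun x t => φ t • fderiv ℝ u (x - t)) (bound := fun t => φ t * M) (Metric.ball_mem_nhds x₀ one_pos)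
    · apply Filter.Eventually.of_forall
      intro x
      exact (hφc.smul (hc.comp (continuous_const.sub continuous_id))).aestronglyMeasurable
    · apply Continuous.integrable_of_hasCompactSupport
      · exact hφc.smul (hc.comp (continuous_const.sub continuous_id))
      · exact (ψ.hasCompactSupport_normed).smul_right
    · exact (hφc.smul (hdc.comp (continuous_const.sub continuous_id))).aestronglyMeasurable
    · apply Filter.Eventually.of_forall
      intro t x _
      refine ContinuousLinearMap.opNorm_le_bound _
        (mul_nonneg (ψ.nonneg_normed t) (by linarith)) (fun w => ?_)
      rw [ContinuousLinearMap.smul_apply, norm_smul, Real.norm_eq_abs,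
        abs_of_nonneg (ψ.nonneg_normed t), mul_assoc]
      refine mul_le_mul_of_nonneg_left ?_ (ψ.nonneg_normed t)
      calc ‖fderiv ℝ u (x - t) w‖ ≤ ‖fderiv ℝ u (x - t)‖ * ‖w‖ :=
            ContinuousLinearMap.le_opNorm _ _
        _ ≤ M * ‖w‖ := mul_le_mul_of_nonneg_right (hM _) (norm_nonneg w)
    · exact (ψ.integrable_normed).mul_const M
    · apply Filter.Eventually.of_forall
      intro t x _
      have h1 : HasFDerivAt (fun x : Vd d => x - t) (ContinuousLinearMap.id ℝ (Vd d)) x :=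
        (hasFDerivAt_id x).sub_const t
      have h2 := ((hud (x - t)).hasFDerivAt).comp x h1
      have h3 := h2.const_smul (φ t)
      simpa [ContinuousLinearMap.comp_id, Function.comp_def, Pi.smul_def] using h3
  refine ⟨s₀, hsmooth, ?_, ?_⟩
  · intro x mv
    rw [hval, hval]
    congr 1
    funext t
    have : x + intVec mv - t = (x - t) + intVec mv := by abel
    rw [this, hper]
  · intro x
    constructor
    · rw [hval]
      apply conv_close ψ u hc x ρ hρ.le
      intro t ht
      apply hu1
      have : x - t - x = -t := by abel
      rw [this, norm_neg]
      have : ψ.rOut = δ := rfl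
      exact le_trans (le_of_lt (by rwa [this] at ht)) (min_le_left _ _)
    · rw [(hder x).fderiv]
      apply conv_close ψ (fderiv ℝ u) hdc x ρ hρ.le
      intro t ht
      apply hu2
      have : x - t - x = -t := by abel
      rw [this, norm_neg]
      have : ψ.rOut = δ := rfl
      exact le_trans (le_of_lt (by rwa [this] at ht)) (min_le_right _ _)

end Aux


-- TRANSFER

namespace Aux
variable {d : ℕ}

lemma anosov_transfer (F G Gi : Vd d → Vd d)
    (hFd : Differentiable ℝ F)
    (hGd : Differentiable ℝ G) (hGid : Differentiable ℝ Gi)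
    (hGfc : Continuous (fun x => fderiv ℝ G x)) (hGifc : Continuous (fun x => fderiv ℝ Gi x))
    (hGic : Continuous Gi)
    (hli : Function.LeftInverse Gi G) (hri : Function.RightInverse Gi G)
    (hcomp1 : ∀ t, (fderiv ℝ Gi (G t)).comp (fderiv ℝ G t) = ContinuousLinearMap.id ℝ (Vd d))
    (hcomp2 : ∀ t, (fderiv ℝ G t).comp (fderiv ℝ Gi (G t)) = ContinuousLinearMap.id ℝ (Vd d))
    (hGequiv : ∀ x mv, G (x + intVec mv) = G x + intVec mv)
    (M₁ M₂ : ℝ) (hM₁l : 1 ≤ M₁) (hM₂l : 1 ≤ M₂)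
    (hM₁ : ∀ x, ‖fderiv ℝ G x‖ ≤ M₁) (hM₂ : ∀ x, ‖fderiv ℝ Gi x‖ ≤ M₂)
    (hAn : IsAnosovLift F) :
    IsAnosovLift (fun x => G (F (Gi x))) := by
  obtain ⟨Es, Eu, hinf, hsup, hper, ⟨P, hPc, hPs, hPu⟩, hEsinv, hEuinv, C, hC, μ, hμ, hest⟩ := hAn
  set Ft : Vd d → Vd d := fun x => G (F (Gi x)) with hFt
  -- applied versions of the inverse-derivative identities
  have hca : ∀ t u, fderiv ℝ Gi (G t) (fderiv ℝ G t u) = u := by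
    intro t u
    have := congrArg (fun (T : Vd d →L[ℝ] Vd d) => T u) (hcomp1 t)
    simpa using this
  have hcb : ∀ t u, fderiv ℝ G t (fderiv ℝ Gi (G t) u) = u := by
    intro t u
    have := congrArg (fun (T : Vd d →L[ℝ] Vd d) => T u) (hcomp2 t)
    simpa using this
  have hca' : ∀ x u, fderiv ℝ Gi x (fderiv ℝ G (Gi x) u) = u := by
    intro x u
    have := hca (Gi x) u
    rwa [hri x] at this
  have hcb' : ∀ x u, fderiv ℝ G (Gi x) (fderiv ℝ Gi x u) = u := by
    intro x u
    have := hcb (Gi x) u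
    rwa [hri x] at this
  -- equivariance of Gi
  have hGiequiv : ∀ x mv, Gi (x + intVec mv) = Gi x + intVec mv := by
    intro x mv
    have : G (Gi x + intVec mv) = x + intVec mv := by rw [hGequiv, hri]
    calc Gi (x + intVec mv) = Gi (G (Gi x + intVec mv)) := by rw [this]
      _ = Gi x + intVec mv := hli _
  -- periodicity of the derivatives
  have hDGper : ∀ x mv, fderiv ℝ G (x + intVec mv) = fderiv ℝ G x := fun x mv =>
    fderiv_equivariant hGd (intVec mv) (intVec mv) (fun y => hGequiv y mv) x
  have hDGiper : ∀ x mv, fderiv ℝ Gi (x + intVec mv) = fderiv ℝ Gi x := fun x mv =>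
    fderiv_equivariant hGid (intVec mv) (intVec mv) (fun y => hGiequiv y mv) x
  -- derivative of Ft
  have hFtder : ∀ x, HasFDerivAt Ft
      ((fderiv ℝ G (F (Gi x))).comp ((fderiv ℝ F (Gi x)).comp (fderiv ℝ Gi x))) x := by
    intro x
    have h1 : HasFDerivAt Gi (fderiv ℝ Gi x) x := (hGid x).hasFDerivAt
    have h2 : HasFDerivAt F (fderiv ℝ F (Gi x)) (Gi x) := (hFd _).hasFDerivAt
    have h3 : HasFDerivAt G (fderiv ℝ G (F (Gi x))) (F (Gi x)) := (hGd _).hasFDerivAt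
    exact h3.comp x (h2.comp x h1)
  have hFtfd : ∀ x, fderiv ℝ Ft x
      = (fderiv ℝ G (F (Gi x))).comp ((fderiv ℝ F (Gi x)).comp (fderiv ℝ Gi x)) := fun x =>
    (hFtder x).fderiv
  have hFtfd' : ∀ x u, fderiv ℝ Ft x u
      = fderiv ℝ G (F (Gi x)) (fderiv ℝ F (Gi x) (fderiv ℝ Gi x u)) := by
    intro x u; rw [hFtfd x]; rfl
  -- the conjugated cocycle
  have hDIter : ∀ n x u, DIter Ft n x u
      = fderiv ℝ G (F^[n] (Gi x)) (DIter F n (Gi x) (fderiv ℝ Gi x u)) := by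
    intro n
    induction n with
    | zero =>
      intro x u
      simp only [DIter, Function.iterate_zero_apply, ContinuousLinearMap.id_apply]
      rw [hcb' x u]
    | succ n ih =>
      intro x u
      have hGiFt : Gi (Ft x) = F (Gi x) := hli _
      have e1 : DIter Ft (n+1) x u = DIter Ft n (Ft x) (fderiv ℝ Ft x u) := rfl
      rw [e1, ih (Ft x) (fderiv ℝ Ft x u), hFtfd' x u, hGiFt]
      have e2 : fderiv ℝ Gi (Ft x) (fderiv ℝ G (F (Gi x)) (fderiv ℝ F (Gi x) (fderiv ℝ Gi x u)))
          = fderiv ℝ F (Gi x) (fderiv ℝ Gi x u) := hca _ _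
      rw [e2]
      have e3 : DIter F n (F (Gi x)) (fderiv ℝ F (Gi x) (fderiv ℝ Gi x u))
          = DIter F (n+1) (Gi x) (fderiv ℝ Gi x u) := rfl
      rw [e3, Function.iterate_succ_apply]
  -- injectivity and surjectivity of the derivative of G
  have hDGinj : ∀ y, Function.Injective (fderiv ℝ G y) := by
    intro y u u' h
    have := congrArg (fderiv ℝ Gi (G y)) h
    rwa [hca y u, hca y u'] at this
  have hDGsurj : ∀ y, Function.Surjective (fderiv ℝ G y) := by
    intro y w
    exact ⟨fderiv ℝ Gi (G y) w, hcb y w⟩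
  -- the transported splitting
  refine ⟨fun x => (Es (Gi x)).map (fderiv ℝ G (Gi x)).toLinearMap,
          fun x => (Eu (Gi x)).map (fderiv ℝ G (Gi x)).toLinearMap,
          ?_, ?_, ?_, ?_, ?_, ?_, ?_⟩
  · intro x
    dsimp only
    rw [← Submodule.map_inf (fderiv ℝ G (Gi x)).toLinearMap (hDGinj (Gi x)), hinf,
      Submodule.map_bot]
  · intro x
    dsimp only
    rw [← Submodule.map_sup, hsup, Submodule.map_top]
    exact LinearMap.range_eq_top.mpr (hDGsurj (Gi x))
  · intro x mv
    dsimp only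
    rw [hGiequiv x mv, hDGper, (hper (Gi x) mv).1, (hper (Gi x) mv).2]
    exact ⟨rfl, rfl⟩
  · refine ⟨fun x => ((fderiv ℝ G (Gi x)).comp (P (Gi x))).comp (fderiv ℝ Gi x), ?_, ?_, ?_⟩
    · exact ((hGfc.comp hGic).clm_comp (hPc.comp hGic)).clm_comp hGifc
    · intro x v hv
      obtain ⟨u, hu, rfl⟩ := Submodule.mem_map.mp hv
      simp only [ContinuousLinearMap.comp_apply, ContinuousLinearMap.coe_coe]
      rw [hca' x u, hPs (Gi x) u hu]
    · intro x v hv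
      obtain ⟨u, hu, rfl⟩ := Submodule.mem_map.mp hv
      simp only [ContinuousLinearMap.comp_apply, ContinuousLinearMap.coe_coe]
      rw [hca' x u, hPu (Gi x) u hu, map_zero]
  · intro x
    dsimp only
    have hGiFt : Gi (Ft x) = F (Gi x) := hli _
    have hkey : (fderiv ℝ Ft x).comp (fderiv ℝ G (Gi x))
        = (fderiv ℝ G (F (Gi x))).comp (fderiv ℝ F (Gi x)) := by
      ext u
      simp only [ContinuousLinearMap.comp_apply]
      rw [hFtfd' x, hca' x u]
    calc ((Es (Gi x)).map (fderiv ℝ G (Gi x)).toLinearMap).map (fderiv ℝ Ft x).toLinearMap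
        = (Es (Gi x)).map ((fderiv ℝ Ft x).comp (fderiv ℝ G (Gi x))).toLinearMap := by
          rw [ContinuousLinearMap.toLinearMap_comp, Submodule.map_comp]
      _ = (Es (Gi x)).map ((fderiv ℝ G (F (Gi x))).comp (fderiv ℝ F (Gi x))).toLinearMap := by
          rw [hkey]
      _ = ((Es (Gi x)).map (fderiv ℝ F (Gi x)).toLinearMap).map
            (fderiv ℝ G (F (Gi x))).toLinearMap := by
          rw [ContinuousLinearMap.toLinearMap_comp, Submodule.map_comp]
      _ = (Es (F (Gi x))).map (fderiv ℝ G (F (Gi x))).toLinearMap := by rw [hEsinv]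
      _ = (Es (Gi (Ft x))).map (fderiv ℝ G (Gi (Ft x))).toLinearMap := by rw [hGiFt]
  · intro x
    dsimp only
    have hGiFt : Gi (Ft x) = F (Gi x) := hli _
    have hkey : (fderiv ℝ Ft x).comp (fderiv ℝ G (Gi x))
        = (fderiv ℝ G (F (Gi x))).comp (fderiv ℝ F (Gi x)) := by
      ext u
      simp only [ContinuousLinearMap.comp_apply]
      rw [hFtfd' x, hca' x u]
    calc ((Eu (Gi x)).map (fderiv ℝ G (Gi x)).toLinearMap).map (fderiv ℝ Ft x).toLinearMap
        = (Eu (Gi x)).map ((fderiv ℝ Ft x).comp (fderiv ℝ G (Gi x))).toLinearMap := by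
          rw [ContinuousLinearMap.toLinearMap_comp, Submodule.map_comp]
      _ = (Eu (Gi x)).map ((fderiv ℝ G (F (Gi x))).comp (fderiv ℝ F (Gi x))).toLinearMap := by
          rw [hkey]
      _ = ((Eu (Gi x)).map (fderiv ℝ F (Gi x)).toLinearMap).map
            (fderiv ℝ G (F (Gi x))).toLinearMap := by
          rw [ContinuousLinearMap.toLinearMap_comp, Submodule.map_comp]
      _ = (Eu (F (Gi x))).map (fderiv ℝ G (F (Gi x))).toLinearMap := by rw [hEuinv]
      _ = (Eu (Gi (Ft x))).map (fderiv ℝ G (Gi (Ft x))).toLinearMap := by rw [hGiFt]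
  · refine ⟨C * (M₁ * M₂), mul_pos hC (mul_pos (lt_of_lt_of_le one_pos hM₁l)
      (lt_of_lt_of_le one_pos hM₂l)), μ, hμ, ?_⟩
    intro x n
    have hμn : (0:ℝ) ≤ μ ^ n := le_of_lt (pow_pos hμ.1 n)
    constructor
    · intro v hv0
      obtain ⟨u, hu, rfl⟩ := Submodule.mem_map.mp hv0
      have hv : fderiv ℝ Gi x ((fderiv ℝ G (Gi x)).toLinearMap u) = u := hca' x u
      rw [hDIter n x _, hv]
      have h1 : ‖fderiv ℝ G (F^[n] (Gi x)) (DIter F n (Gi x) u)‖ ≤ M₁ * ‖DIter F n (Gi x) u‖ :=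
        ContinuousLinearMap.le_of_opNorm_le _ (hM₁ _) _
      have h2 : ‖DIter F n (Gi x) u‖ ≤ C * μ ^ n * ‖u‖ := (hest (Gi x) n).1 u hu
      have h3 : ‖u‖ ≤ M₂ * ‖(fderiv ℝ G (Gi x)).toLinearMap u‖ := by
        calc ‖u‖ = ‖fderiv ℝ Gi x ((fderiv ℝ G (Gi x)).toLinearMap u)‖ := by rw [hv]
          _ ≤ M₂ * ‖(fderiv ℝ G (Gi x)).toLinearMap u‖ :=
            ContinuousLinearMap.le_of_opNorm_le _ (hM₂ _) _
      have hM₁0 : (0:ℝ) ≤ M₁ := by linarith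
      calc ‖fderiv ℝ G (F^[n] (Gi x)) (DIter F n (Gi x) u)‖
          ≤ M₁ * ‖DIter F n (Gi x) u‖ := h1
        _ ≤ M₁ * (C * μ ^ n * ‖u‖) := by
            apply mul_le_mul_of_nonneg_left h2 hM₁0
        _ ≤ M₁ * (C * μ ^ n * (M₂ * ‖(fderiv ℝ G (Gi x)).toLinearMap u‖)) := by
            apply mul_le_mul_of_nonneg_left _ hM₁0
            apply mul_le_mul_of_nonneg_left h3
            positivity
        _ = C * (M₁ * M₂) * μ ^ n * ‖(fderiv ℝ G (Gi x)).toLinearMap u‖ := by ring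
    · intro v hv0
      obtain ⟨u, hu, rfl⟩ := Submodule.mem_map.mp hv0
      have hv : fderiv ℝ Gi x ((fderiv ℝ G (Gi x)).toLinearMap u) = u := hca' x u
      rw [hDIter n x _, hv]
      have h1 : ‖(fderiv ℝ G (Gi x)).toLinearMap u‖ ≤ M₁ * ‖u‖ :=
        ContinuousLinearMap.le_of_opNorm_le _ (hM₁ _) _
      have h2 : ‖u‖ ≤ C * μ ^ n * ‖DIter F n (Gi x) u‖ := (hest (Gi x) n).2 u hu
      have h3 : ‖DIter F n (Gi x) u‖
          ≤ M₂ * ‖fderiv ℝ G (F^[n] (Gi x)) (DIter F n (Gi x) u)‖ := by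
        calc ‖DIter F n (Gi x) u‖
            = ‖fderiv ℝ Gi (G (F^[n] (Gi x)))
                (fderiv ℝ G (F^[n] (Gi x)) (DIter F n (Gi x) u))‖ := by rw [hca]
          _ ≤ M₂ * ‖fderiv ℝ G (F^[n] (Gi x)) (DIter F n (Gi x) u)‖ :=
            ContinuousLinearMap.le_of_opNorm_le _ (hM₂ _) _
      have hM₁0 : (0:ℝ) ≤ M₁ := by linarith
      calc ‖(fderiv ℝ G (Gi x)).toLinearMap u‖ ≤ M₁ * ‖u‖ := h1
        _ ≤ M₁ * (C * μ ^ n * ‖DIter F n (Gi x) u‖) := by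
            apply mul_le_mul_of_nonneg_left h2 hM₁0
        _ ≤ M₁ * (C * μ ^ n * (M₂ * ‖fderiv ℝ G (F^[n] (Gi x)) (DIter F n (Gi x) u)‖)) := by
            apply mul_le_mul_of_nonneg_left _ hM₁0
            apply mul_le_mul_of_nonneg_left h3
            positivity
        _ = C * (M₁ * M₂) * μ ^ n
              * ‖fderiv ℝ G (F^[n] (Gi x)) (DIter F n (Gi x) u)‖ := by ring

end Aux


/-- **Observation (a `C¹` conjugacy can be smoothed).**
If a `C^∞` Anosov diffeomorphism `f` homotopic to `L` is conjugate to `L` by a `C¹`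
diffeomorphism, then for every `ε > 0`, `f` is `C^∞` conjugate (by a `C^∞`
diffeomorphism `h̃` of the torus) to a `C^∞` Anosov diffeomorphism `f̃` homotopic to `L`
that is `ε`-close to `L` in the `C¹` sense. -/
theorem smooth_conjugate_close_to_linear
    {d : ℕ} (L : Matrix (Fin d) (Fin d) ℤ) (hL : IsAnosovAuto L)
    (F : Vd d → Vd d) (hF : IsCrDiffeo ⊤ F) (hlift : IsLiftOf F L)
    (hAnosov : IsAnosovLift F)
    (H : Vd d → Vd d) (hconj : IsConjugacyLift H F (LmapR L))
    (hC1 : ContDiff ℝ 1 H ∧ Function.Bijective H ∧ ContDiff ℝ 1 (Function.invFun H))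
    (ε : ℝ) (hε : 0 < ε) :
    ∃ Ht Ft : Vd d → Vd d,
      IsCrDiffeo ⊤ Ht ∧
      (∀ x : Vd d, ∀ mv : Fin d → ℤ, Ht (x + intVec mv) = Ht x + intVec mv) ∧
      IsCrDiffeo ⊤ Ft ∧ IsLiftOf Ft L ∧ IsAnosovLift Ft ∧
      (∀ x, Ht (F x) = Ft (Ht x)) ∧
      (∀ x, ‖Ft x - LmapR L x‖ + ‖fderiv ℝ Ft x - LCLM L‖ < ε) := by
  classical
  obtain ⟨hHs, hHbij, hHis⟩ := hC1
  set Hi := Function.invFun H with hHidef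
  have hHequiv := hconj.2.2.2.1
  have hHF : ∀ x, H (F x) = LmapR L (H x) := hconj.2.2.2.2
  have hHd : Differentiable ℝ H := hHs.differentiable one_ne_zero
  have hHid : Differentiable ℝ Hi := hHis.differentiable one_ne_zero
  have hHliH : Function.LeftInverse Hi H := Function.leftInverse_invFun hHbij.injective
  have hHriH : Function.RightInverse Hi H := Function.rightInverse_invFun hHbij.surjective
  have hHiequiv := Aux.invFun_equivariant hHbij hHequiv
  have hDHper : ∀ x mv, fderiv ℝ H (x + intVec mv) = fderiv ℝ H x := fun x mv =>
    Aux.fderiv_equivariant hHd _ _ (fun y => hHequiv y mv) x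
  have hDHiper : ∀ x mv, fderiv ℝ Hi (x + intVec mv) = fderiv ℝ Hi x := fun x mv =>
    Aux.fderiv_equivariant hHid _ _ (fun y => hHiequiv y mv) x
  have hDHc : Continuous (fderiv ℝ H) := hHs.continuous_fderiv one_ne_zero
  have hDHic : Continuous (fderiv ℝ Hi) := hHis.continuous_fderiv one_ne_zero
  obtain ⟨MH, hMH1, hMHb⟩ := Aux.per_bounded (fderiv ℝ H) hDHc hDHper
  obtain ⟨K, hK1, hKb⟩ := Aux.per_bounded (fderiv ℝ Hi) hDHic hDHiper
  have hK0 : (0:ℝ) < K := by linarith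
  have hMH0 : (0:ℝ) < MH := by linarith
  have hHiLip : ∀ a b, ‖Hi a - Hi b‖ ≤ K * ‖a - b‖ := Aux.lip_of_bound hHid K hKb
  have hHLip : ∀ a b, ‖H a - H b‖ ≤ MH * ‖a - b‖ := Aux.lip_of_bound hHd MH hMHb
  -- F facts
  have hFs := hF.1
  have htop1 : ((⊤:ℕ∞) : WithTop ℕ∞) ≠ 0 := by simp
  have hFd : Differentiable ℝ F := hFs.differentiable htop1
  have hDFc : Continuous (fderiv ℝ F) := hFs.continuous_fderiv htop1
  have hDFper : ∀ x mv, fderiv ℝ F (x + intVec mv) = fderiv ℝ F x := fun x mv =>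
    Aux.fderiv_equivariant hFd _ _ (fun y => hlift y mv) x
  obtain ⟨MF, hMF1, hMFb⟩ := Aux.per_bounded (fderiv ℝ F) hDFc hDFper
  have hMF0 : (0:ℝ) < MF := by linarith
  have hFLip : ∀ a b, ‖F a - F b‖ ≤ MF * ‖a - b‖ := Aux.lip_of_bound hFd MF hMFb
  -- the linear map
  have hLfun : ⇑(LCLM (d := d) L) = LmapR L := rfl
  have hLder : ∀ x : Vd d, HasFDerivAt (LmapR L) (LCLM L) x := by
    intro x
    have := (LCLM (d := d) L).hasFDerivAt (x := x)
    rwa [hLfun] at this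
  -- chain rules for H
  have hHchain1 : ∀ x u, fderiv ℝ Hi (H x) (fderiv ℝ H x u) = u := by
    intro x u
    have h := ((hHid (H x)).hasFDerivAt).comp x (hHd x).hasFDerivAt
    have hid : (Hi ∘ H) = id := funext hHliH
    rw [hid] at h
    have := h.unique (hasFDerivAt_id x)
    have := congrArg (fun (T : Vd d →L[ℝ] Vd d) => T u) this
    simpa using this
  have hHchain2 : ∀ x u, fderiv ℝ H (Hi x) (fderiv ℝ Hi x u) = u := by
    intro x u
    have h := ((hHd (Hi x)).hasFDerivAt).comp x (hHid x).hasFDerivAt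
    have hid : (H ∘ Hi) = id := funext hHriH
    rw [hid] at h
    have := h.unique (hasFDerivAt_id x)
    have := congrArg (fun (T : Vd d →L[ℝ] Vd d) => T u) this
    simpa using this
  have hDHlow : ∀ x u, (1/K) * ‖u‖ ≤ ‖fderiv ℝ H x u‖ := by
    intro x u
    have h1 : ‖u‖ = ‖fderiv ℝ Hi (H x) (fderiv ℝ H x u)‖ := by rw [hHchain1]
    have h2 : ‖fderiv ℝ Hi (H x) (fderiv ℝ H x u)‖ ≤ K * ‖fderiv ℝ H x u‖ :=
      ContinuousLinearMap.le_of_opNorm_le _ (hKb _) _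
    rw [div_mul_eq_mul_div, one_mul, div_le_iff₀ hK0, mul_comm]
    linarith
  -- the derivative identity for the conjugacy
  have hA : ∀ x u, LCLM L u
      = fderiv ℝ H (F (Hi x)) (fderiv ℝ F (Hi x) (fderiv ℝ Hi x u)) := by
    intro x u
    have hcomp : (fderiv ℝ H (F (Hi x))).comp (fderiv ℝ F (Hi x))
        = (LCLM L).comp (fderiv ℝ H (Hi x)) := by
      have h1 := ((hHd (F (Hi x))).hasFDerivAt).comp (Hi x) (hFd (Hi x)).hasFDerivAt
      have h2 := (hLder (H (Hi x))).comp (Hi x) (hHd (Hi x)).hasFDerivAt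
      have hfun : (H ∘ F) = (LmapR L ∘ H) := funext hHF
      rw [hfun] at h1
      exact h1.unique h2
    calc LCLM L u = LCLM L (fderiv ℝ H (Hi x) (fderiv ℝ Hi x u)) := by rw [hHchain2]
      _ = ((LCLM L).comp (fderiv ℝ H (Hi x))) (fderiv ℝ Hi x u) := rfl
      _ = ((fderiv ℝ H (F (Hi x))).comp (fderiv ℝ F (Hi x))) (fderiv ℝ Hi x u) := by
          rw [hcomp]
      _ = fderiv ℝ H (F (Hi x)) (fderiv ℝ F (Hi x) (fderiv ℝ Hi x u)) := rfl
  -- constants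
  set B₁ : ℝ := 4*K*MF + 2*K*MH + 4*K^2*MH*MF with hB₁def
  set B₂ : ℝ := 1 + MH*MF*K with hB₂def
  have hB₁pos : (0:ℝ) < B₁ := by rw [hB₁def]; positivity
  have hB₂pos : (0:ℝ) < B₂ := by rw [hB₂def]; positivity
  set θ : ℝ := ε / (2*(B₁+B₂+1)) with hθdef
  have hθ : 0 < θ := by rw [hθdef]; positivity
  obtain ⟨δH, hδH, hUCH⟩ := Aux.per_unifCont (fderiv ℝ H) hDHc hDHper θ hθ
  obtain ⟨δF, hδF, hUCF⟩ := Aux.per_unifCont (fderiv ℝ F) hDFc hDFper θ hθ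
  set η : ℝ := min (min θ (1/(2*K))) (min (δH / (K*(MF+1))) (δF / (K*(MF+1)))) with hηdef
  have hKMF1 : (0:ℝ) < K*(MF+1) := by positivity
  have hη : 0 < η := by
    rw [hηdef]
    refine lt_min (lt_min hθ (by positivity)) (lt_min (by positivity) (by positivity))
  have hηθ : η ≤ θ := le_trans (min_le_left _ _) (min_le_left _ _)
  have hηK : η ≤ 1/(2*K) := le_trans (min_le_left _ _) (min_le_right _ _)
  have hηδH : K*(MF+1)*η ≤ δH := by
    have h : η ≤ δH / (K*(MF+1)) := le_trans (min_le_right _ _) (min_le_left _ _)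
    rw [le_div_iff₀ hKMF1] at h
    linarith [h]
  have hηδF : K*(MF+1)*η ≤ δF := by
    have h : η ≤ δF / (K*(MF+1)) := le_trans (min_le_right _ _) (min_le_right _ _)
    rw [le_div_iff₀ hKMF1] at h
    linarith [h]
  have hKη_δH : K*η ≤ δH := by nlinarith [hη.le, hK0.le]
  have hKη_δF : K*η ≤ δF := by nlinarith [hη.le, hK0.le]
  have hMFKη_δH : MF*(K*η) ≤ δH := by nlinarith [hη.le, hK0.le]
  have hKη2 : K*η ≤ 1/2 := by
    have := mul_le_mul_of_nonneg_left hηK hK0.le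
    calc K*η ≤ K*(1/(2*K)) := this
      _ = 1/2 := by field_simp
  -- smoothing
  set v : Vd d → Vd d := fun x => H x - x with hvdef
  have hvs : ContDiff ℝ 1 v := hHs.sub contDiff_id
  have hvper : ∀ x mv, v (x + intVec mv) = v x := by
    intro x mv
    simp only [hvdef]
    rw [hHequiv]
    abel
  obtain ⟨s, hss, hsper, hsapp⟩ := Aux.exists_smooth_approx v hvs hvper η hη
  set Ht : Vd d → Vd d := fun x => x + s x with hHtdef
  have hHts : ContDiff ℝ ((⊤:ℕ∞) : ℕ∞) Ht := contDiff_id.add hss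
  have hHtd : Differentiable ℝ Ht := hHts.differentiable htop1
  have hsd : Differentiable ℝ s := hss.differentiable htop1
  have hvd : Differentiable ℝ v := hvs.differentiable one_ne_zero
  have hwx : ∀ x, Ht x - H x = s x - v x := by
    intro x
    simp only [hHtdef, hvdef]
    abel
  have hC0 : ∀ x, ‖Ht x - H x‖ ≤ η := by
    intro x
    rw [hwx x]
    exact (hsapp x).1
  have hDHt : ∀ x, fderiv ℝ Ht x = ContinuousLinearMap.id ℝ (Vd d) + fderiv ℝ s x := by
    intro x
    exact ((hasFDerivAt_id x).add (hsd x).hasFDerivAt).fderiv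
  have hHfun : H = fun x => x + v x := by
    funext x
    simp only [hvdef]
    abel
  have hDHsplit : ∀ x, fderiv ℝ H x = ContinuousLinearMap.id ℝ (Vd d) + fderiv ℝ v x := by
    intro x
    conv_lhs => rw [hHfun]
    exact ((hasFDerivAt_id x).add (hvd x).hasFDerivAt).fderiv
  have hDC1 : ∀ x, ‖fderiv ℝ Ht x - fderiv ℝ H x‖ ≤ η := by
    intro x
    rw [hDHt x, hDHsplit x]
    have : (ContinuousLinearMap.id ℝ (Vd d) + fderiv ℝ s x)
        - (ContinuousLinearMap.id ℝ (Vd d) + fderiv ℝ v x) = fderiv ℝ s x - fderiv ℝ v x := by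
      abel
    rw [this]
    exact (hsapp x).2
  have hwdiff : Differentiable ℝ (fun x => Ht x - H x) := hHtd.sub hHd
  have hwLip : ∀ a b, ‖(Ht a - H a) - (Ht b - H b)‖ ≤ η * ‖a - b‖ := by
    intro a b
    refine Aux.lip_of_bound hwdiff η (fun x => ?_) a b
    rw [fderiv_fun_sub (hHtd x) (hHd x)]
    exact hDC1 x
  have hHtequiv : ∀ x mv, Ht (x + intVec mv) = Ht x + intVec mv := by
    intro x mv
    simp only [hHtdef]
    rw [hsper]
    abel
  have hHlow : ∀ a b, (1/K) * ‖a - b‖ ≤ ‖H a - H b‖ := by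
    intro a b
    have h1 : ‖a - b‖ = ‖Hi (H a) - Hi (H b)‖ := by rw [hHliH a, hHliH b]
    have h2 : ‖Hi (H a) - Hi (H b)‖ ≤ K * ‖H a - H b‖ := hHiLip _ _
    rw [div_mul_eq_mul_div, one_mul, div_le_iff₀ hK0, mul_comm]
    linarith
  -- Ht is injective
  have hHtinj : Function.Injective Ht := by
    intro a b hab
    have h1 : H a - H b = (Ht b - H b) - (Ht a - H a) := by rw [← hab]; abel
    have h2 : ‖H a - H b‖ ≤ η * ‖b - a‖ := by rw [h1]; exact hwLip b a
    rw [norm_sub_rev b a] at h2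
    have h3 := hHlow a b
    have h4 : η * ‖a - b‖ ≤ (1/(2*K)) * ‖a - b‖ :=
      mul_le_mul_of_nonneg_right hηK (norm_nonneg _)
    have h5 : (1/K) * ‖a - b‖ = 2 * ((1/(2*K)) * ‖a - b‖) := by field_simp
    have h6 : (0:ℝ) < 1/(2*K) := by positivity
    have hX : ‖a - b‖ ≤ 0 := by nlinarith [norm_nonneg (a - b)]
    have : ‖a - b‖ = 0 := le_antisymm hX (norm_nonneg _)
    exact sub_eq_zero.mp (norm_eq_zero.mp this)
  -- Ht is surjective (contraction argument)
  have hHtsurj : Function.Surjective Ht := by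
    intro z
    set T : Vd d → Vd d := fun x => Hi (z - (Ht x - H x)) with hTdef
    have hTlip : LipschitzWith ((1:NNReal)/2) T := by
      apply LipschitzWith.of_dist_le_mul
      intro a b
      simp only [hTdef, dist_eq_norm]
      have h1 : ‖Hi (z - (Ht a - H a)) - Hi (z - (Ht b - H b))‖
          ≤ K * ‖(z - (Ht a - H a)) - (z - (Ht b - H b))‖ := hHiLip _ _
      have h2 : (z - (Ht a - H a)) - (z - (Ht b - H b))
          = (Ht b - H b) - (Ht a - H a) := by abel
      rw [h2] at h1
      have h3 : ‖(Ht b - H b) - (Ht a - H a)‖ ≤ η * ‖b - a‖ := hwLip b a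
      have h4 : K * (η * ‖b - a‖) ≤ (1/2) * ‖b - a‖ := by
        rw [norm_sub_rev b a, ← mul_assoc]
        exact mul_le_mul_of_nonneg_right hKη2 (norm_nonneg _)
      have hcoe : ((1:NNReal)/2 : NNReal) = ((1:ℝ)/2 : ℝ) := by norm_num
      calc ‖Hi (z - (Ht a - H a)) - Hi (z - (Ht b - H b))‖
          ≤ K * (η * ‖b - a‖) := by
            refine le_trans h1 (mul_le_mul_of_nonneg_left h3 hK0.le)
        _ ≤ (1/2) * ‖b - a‖ := h4
        _ = ((1:NNReal)/2 : NNReal) * ‖a - b‖ := by rw [norm_sub_rev b a]; norm_num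
    have hcontr : ContractingWith ((1:NNReal)/2) T :=
      ⟨by rw [← NNReal.coe_lt_coe]; push_cast; norm_num, hTlip⟩
    obtain ⟨x₀, hfix, -, -⟩ := hcontr.exists_fixedPoint z (edist_ne_top _ _)
    have hfix' : Hi (z - (Ht x₀ - H x₀)) = x₀ := hfix
    have h2 : H x₀ = z - (Ht x₀ - H x₀) := by
      have h := congrArg H hfix'
      rw [hHriH _] at h
      exact h.symm
    refine ⟨x₀, ?_⟩
    have h3 := eq_sub_iff_add_eq.mp h2
    have h4 : H x₀ + (Ht x₀ - H x₀) = Ht x₀ := by abel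
    rw [h4] at h3
    exact h3
  have hHtbij : Function.Bijective Ht := ⟨hHtinj, hHtsurj⟩
  -- lower bound on the derivative of Ht
  set c : ℝ := 1/(2*K) with hcdef
  have hc : 0 < c := by rw [hcdef]; positivity
  have hDHtlow : ∀ t u, c * ‖u‖ ≤ ‖fderiv ℝ Ht t u‖ := by
    intro t u
    have h1 : ‖(fderiv ℝ Ht t - fderiv ℝ H t) u‖ ≤ η * ‖u‖ :=
      ContinuousLinearMap.le_of_opNorm_le _ (hDC1 t) u
    have h2 : fderiv ℝ H t u = fderiv ℝ Ht t u - (fderiv ℝ Ht t - fderiv ℝ H t) u := by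
      simp [ContinuousLinearMap.sub_apply]
    have h3 : (1/K) * ‖u‖ ≤ ‖fderiv ℝ H t u‖ := hDHlow t u
    have h4 : ‖fderiv ℝ H t u‖ ≤ ‖fderiv ℝ Ht t u‖ + η * ‖u‖ := by
      rw [h2]
      exact le_trans (norm_sub_le _ _) (by linarith)
    have h5 : η * ‖u‖ ≤ c * ‖u‖ := by
      rw [hcdef]
      exact mul_le_mul_of_nonneg_right hηK (norm_nonneg _)
    have h6 : (1/K) * ‖u‖ = 2 * (c * ‖u‖) := by rw [hcdef]; field_simp
    linarith
  obtain ⟨hHtis, hcomp1, hcomp2, hHtibnd⟩ := Aux.inverse_package Ht hHts hHtbij c hc hDHtlow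
  set Hti : Vd d → Vd d := Function.invFun Ht with hHtidef
  have hHtid : Differentiable ℝ Hti := hHtis.differentiable htop1
  have hHtili : Function.LeftInverse Hti Ht := Function.leftInverse_invFun hHtbij.injective
  have hHtiri : Function.RightInverse Hti Ht := Function.rightInverse_invFun hHtbij.surjective
  have hHtibij : Function.Bijective Hti :=
    ⟨fun a b hab => by rw [← hHtiri a, hab, hHtiri], fun b => ⟨Ht b, hHtili b⟩⟩
  have hHtiequiv : ∀ y mv, Hti (y + intVec mv) = Hti y + intVec mv :=
    Aux.invFun_equivariant hHtbij hHtequiv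
  have h2K : 1/c = 2*K := by rw [hcdef]; field_simp
  have hHtibnd2 : ∀ z, ‖fderiv ℝ Hti z‖ ≤ 2*K := by
    intro z
    have := hHtibnd z
    rwa [h2K] at this
  set Ft : Vd d → Vd d := fun x => Ht (F (Hti x)) with hFtdef
  have hFts : ContDiff ℝ ((⊤:ℕ∞) : ℕ∞) Ft := hHts.comp (hFs.comp hHtis)
  have hFtbij : Function.Bijective Ft := (hHtbij.comp hF.2.1).comp hHtibij
  -- the inverse of Ft
  have hFinv_ri : ∀ z, F (Function.invFun F z) = z :=
    Function.rightInverse_invFun hF.2.1.surjective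
  have hFtinv : Function.invFun Ft = fun z => Ht (Function.invFun F (Hti z)) := by
    funext z
    apply hFtbij.injective
    rw [Function.rightInverse_invFun hFtbij.surjective z]
    show z = Ht (F (Hti (Ht (Function.invFun F (Hti z)))))
    rw [hHtili, hFinv_ri, hHtiri]
  have hDHtper : ∀ x mv, fderiv ℝ Ht (x + intVec mv) = fderiv ℝ Ht x := fun x mv =>
    Aux.fderiv_equivariant hHtd _ _ (fun y => hHtequiv y mv) x
  obtain ⟨M₁, hM₁1, hM₁b⟩ := Aux.per_bounded (fderiv ℝ Ht) (hHts.continuous_fderiv htop1)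
    hDHtper
  refine ⟨Ht, Ft, ⟨hHts, hHtbij, hHtis⟩, hHtequiv, ⟨hFts, hFtbij, ?_⟩, ?_, ?_, ?_, ?_⟩
  · rw [hFtinv]
    exact hHts.comp (hF.2.2.comp hHtis)
  · -- lift of L
    intro x mv
    show Ht (F (Hti (x + intVec mv))) = Ht (F (Hti x)) + intVec (L.mulVec mv)
    rw [hHtiequiv, hlift, hHtequiv]
  · -- Anosov
    exact Aux.anosov_transfer F Ht Hti hFd hHtd hHtid
      (hHts.continuous_fderiv htop1) (hHtis.continuous_fderiv htop1)
      hHtis.continuous hHtili hHtiri hcomp1 hcomp2 hHtequiv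
      M₁ (2*K) hM₁1 (by linarith) hM₁b hHtibnd2 hAnosov
  · -- conjugacy
    intro x
    show Ht (F x) = Ht (F (Hti (Ht x)))
    rw [hHtili]
  · -- the estimate
    intro x
    have hy : Ht (Hti x) = x := hHtiri x
    have hyc : ‖Hti x - Hi x‖ ≤ K * η := by
      calc ‖Hti x - Hi x‖ = ‖Hi (H (Hti x)) - Hi x‖ := by rw [hHliH (Hti x)]
        _ ≤ K * ‖H (Hti x) - x‖ := hHiLip _ _
        _ ≤ K * η := by
            refine mul_le_mul_of_nonneg_left ?_ hK0.le
            have h1 : H (Hti x) - x = -(Ht (Hti x) - H (Hti x)) := by rw [hy]; abel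
            rw [h1, norm_neg]
            exact hC0 _
    have hFyc : ‖F (Hti x) - F (Hi x)‖ ≤ MF * (K * η) :=
      le_trans (hFLip _ _) (mul_le_mul_of_nonneg_left hyc hMF0.le)
    have hLx : LmapR L x = H (F (Hi x)) := by
      rw [hHF (Hi x), hHriH x]
    have hC0est : ‖Ft x - LmapR L x‖ ≤ θ * B₂ := by
      have h0 : Ft x - LmapR L x
          = (Ht (F (Hti x)) - H (F (Hti x))) + (H (F (Hti x)) - H (F (Hi x))) := by
        rw [hLx]
        show Ht (F (Hti x)) - H (F (Hi x)) = _
        abel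
      rw [h0]
      have h1 := hC0 (F (Hti x))
      have h2 : ‖H (F (Hti x)) - H (F (Hi x))‖ ≤ MH * (MF * (K * η)) :=
        le_trans (hHLip _ _) (mul_le_mul_of_nonneg_left hFyc hMH0.le)
      calc ‖(Ht (F (Hti x)) - H (F (Hti x))) + (H (F (Hti x)) - H (F (Hi x)))‖
          ≤ ‖Ht (F (Hti x)) - H (F (Hti x))‖ + ‖H (F (Hti x)) - H (F (Hi x))‖ :=
            norm_add_le _ _
        _ ≤ η + MH * (MF * (K * η)) := add_le_add h1 h2
        _ = η * B₂ := by rw [hB₂def]; ring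
        _ ≤ θ * B₂ := mul_le_mul_of_nonneg_right hηθ hB₂pos.le
    have hDFt : ∀ u, fderiv ℝ Ft x u
        = fderiv ℝ Ht (F (Hti x)) (fderiv ℝ F (Hti x) (fderiv ℝ Hti x u)) := by
      intro u
      have h1 := ((hFd (Hti x)).hasFDerivAt).comp x (hHtid x).hasFDerivAt
      have h2 := ((hHtd (F (Hti x))).hasFDerivAt).comp x h1
      have h3 := h2.fderiv
      rw [show (Ht ∘ F ∘ Hti) = Ft from rfl] at h3
      rw [h3]
      rfl
    have haux1 : ‖fderiv ℝ Ht (F (Hti x)) - fderiv ℝ H (F (Hi x))‖ ≤ η + θ := by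
      have hsplit : fderiv ℝ Ht (F (Hti x)) - fderiv ℝ H (F (Hi x))
          = (fderiv ℝ Ht (F (Hti x)) - fderiv ℝ H (F (Hti x)))
            + (fderiv ℝ H (F (Hti x)) - fderiv ℝ H (F (Hi x))) := by abel
      rw [hsplit]
      refine le_trans (norm_add_le _ _) (add_le_add (hDC1 _) ?_)
      exact hUCH _ _ (le_trans hFyc hMFKη_δH)
    have haux2 : ‖fderiv ℝ F (Hti x) - fderiv ℝ F (Hi x)‖ ≤ θ :=
      hUCF _ _ (le_trans hyc hKη_δF)
    have haux3 : ‖fderiv ℝ H (Hi x) - fderiv ℝ Ht (Hti x)‖ ≤ θ + η := by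
      have hsplit : fderiv ℝ H (Hi x) - fderiv ℝ Ht (Hti x)
          = (fderiv ℝ H (Hi x) - fderiv ℝ H (Hti x))
            + (fderiv ℝ H (Hti x) - fderiv ℝ Ht (Hti x)) := by abel
      rw [hsplit]
      refine le_trans (norm_add_le _ _) (add_le_add ?_ ?_)
      · refine hUCH _ _ ?_
        rw [norm_sub_rev]
        exact le_trans hyc hKη_δH
      · rw [norm_sub_rev]
        exact hDC1 _
    have hqid : ∀ w, fderiv ℝ Hti x (fderiv ℝ Ht (Hti x) w) = w := by
      intro w
      have h := congrArg (fun (T : Vd d →L[ℝ] Vd d) => T w) (hcomp1 (Hti x))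
      simp only [ContinuousLinearMap.comp_apply, ContinuousLinearMap.id_apply] at h
      rwa [hy] at h
    have h2K0 : (0:ℝ) ≤ 2*K := by linarith
    have hptw : ∀ u, ‖(fderiv ℝ Ft x - LCLM L) u‖ ≤ θ * B₁ * ‖u‖ := by
      intro u
      have hq'bnd : ‖fderiv ℝ Hi x u‖ ≤ K * ‖u‖ :=
        ContinuousLinearMap.le_of_opNorm_le _ (hKb x) u
      have hqbnd : ‖fderiv ℝ Hti x u‖ ≤ 2*K * ‖u‖ :=
        ContinuousLinearMap.le_of_opNorm_le _ (hHtibnd2 x) u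
      have he3eq : fderiv ℝ Hti x u - fderiv ℝ Hi x u
          = fderiv ℝ Hti x
            ((fderiv ℝ H (Hi x) - fderiv ℝ Ht (Hti x)) (fderiv ℝ Hi x u)) := by
        have h1 : (fderiv ℝ H (Hi x) - fderiv ℝ Ht (Hti x)) (fderiv ℝ Hi x u)
            = u - fderiv ℝ Ht (Hti x) (fderiv ℝ Hi x u) := by
          rw [ContinuousLinearMap.sub_apply, hHchain2 x u]
        rw [h1, map_sub, hqid _]
      have he3 : ‖fderiv ℝ Hti x u - fderiv ℝ Hi x u‖ ≤ 4*K^2*θ*‖u‖ := by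
        calc ‖fderiv ℝ Hti x u - fderiv ℝ Hi x u‖
            = ‖fderiv ℝ Hti x
                ((fderiv ℝ H (Hi x) - fderiv ℝ Ht (Hti x)) (fderiv ℝ Hi x u))‖ := by
              rw [he3eq]
          _ ≤ 2*K * ‖(fderiv ℝ H (Hi x) - fderiv ℝ Ht (Hti x)) (fderiv ℝ Hi x u)‖ :=
              ContinuousLinearMap.le_of_opNorm_le _ (hHtibnd2 x) _
          _ ≤ 2*K * ((θ+η) * ‖fderiv ℝ Hi x u‖) := by
              refine mul_le_mul_of_nonneg_left ?_ h2K0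
              exact ContinuousLinearMap.le_of_opNorm_le _ haux3 _
          _ ≤ 2*K * ((θ+θ) * (K*‖u‖)) := by
              refine mul_le_mul_of_nonneg_left ?_ h2K0
              refine mul_le_mul (by linarith) hq'bnd (norm_nonneg _) (by linarith [hθ.le])
          _ = 4*K^2*θ*‖u‖ := by ring
      have hsplitu : (fderiv ℝ Ft x - LCLM L) u
          = (fderiv ℝ Ht (F (Hti x)) - fderiv ℝ H (F (Hi x)))
              (fderiv ℝ F (Hti x) (fderiv ℝ Hti x u))
            + (fderiv ℝ H (F (Hi x))
                ((fderiv ℝ F (Hti x) - fderiv ℝ F (Hi x)) (fderiv ℝ Hti x u))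
              + fderiv ℝ H (F (Hi x))
                (fderiv ℝ F (Hi x) (fderiv ℝ Hti x u - fderiv ℝ Hi x u))) := by
        rw [ContinuousLinearMap.sub_apply, hDFt u, hA x u]
        simp only [ContinuousLinearMap.sub_apply, map_sub]
        abel
      have hbq : ‖fderiv ℝ F (Hti x) (fderiv ℝ Hti x u)‖ ≤ MF * (2*K*‖u‖) :=
        le_trans (ContinuousLinearMap.le_of_opNorm_le _ (hMFb _) _)
          (mul_le_mul_of_nonneg_left hqbnd hMF0.le)
      have t1 : ‖(fderiv ℝ Ht (F (Hti x)) - fderiv ℝ H (F (Hi x)))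
          (fderiv ℝ F (Hti x) (fderiv ℝ Hti x u))‖ ≤ (η+θ) * (MF*(2*K*‖u‖)) :=
        le_trans (ContinuousLinearMap.le_of_opNorm_le _ haux1 _)
          (mul_le_mul_of_nonneg_left hbq (by linarith [hη.le, hθ.le]))
      have t2 : ‖fderiv ℝ H (F (Hi x))
          ((fderiv ℝ F (Hti x) - fderiv ℝ F (Hi x)) (fderiv ℝ Hti x u))‖
          ≤ MH * (θ*(2*K*‖u‖)) := by
        refine le_trans (ContinuousLinearMap.le_of_opNorm_le _ (hMHb _) _) ?_
        refine mul_le_mul_of_nonneg_left ?_ hMH0.le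
        exact le_trans (ContinuousLinearMap.le_of_opNorm_le _ haux2 _)
          (mul_le_mul_of_nonneg_left hqbnd hθ.le)
      have t3 : ‖fderiv ℝ H (F (Hi x))
          (fderiv ℝ F (Hi x) (fderiv ℝ Hti x u - fderiv ℝ Hi x u))‖
          ≤ MH * (MF * (4*K^2*θ*‖u‖)) := by
        refine le_trans (ContinuousLinearMap.le_of_opNorm_le _ (hMHb _) _) ?_
        refine mul_le_mul_of_nonneg_left ?_ hMH0.le
        exact le_trans (ContinuousLinearMap.le_of_opNorm_le _ (hMFb _) _)
          (mul_le_mul_of_nonneg_left he3 hMF0.le)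
      rw [hsplitu]
      calc ‖_ + (_ + _)‖
          ≤ (η+θ) * (MF*(2*K*‖u‖)) + (MH * (θ*(2*K*‖u‖)) + MH * (MF * (4*K^2*θ*‖u‖))) :=
            le_trans (norm_add_le _ _)
              (add_le_add t1 (le_trans (norm_add_le _ _) (add_le_add t2 t3)))
        _ ≤ (θ+θ) * (MF*(2*K*‖u‖)) + (MH * (θ*(2*K*‖u‖)) + MH * (MF * (4*K^2*θ*‖u‖))) := by
            have h1 : η + θ ≤ θ + θ := by linarith
            have h2 : (0:ℝ) ≤ MF*(2*K*‖u‖) := by positivity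
            nlinarith [mul_le_mul_of_nonneg_right h1 h2]
        _ = θ * B₁ * ‖u‖ := by rw [hB₁def]; ring
    have hC1est : ‖fderiv ℝ Ft x - LCLM L‖ ≤ θ * B₁ :=
      ContinuousLinearMap.opNorm_le_bound _ (mul_nonneg hθ.le hB₁pos.le) hptw
    have hθval : θ * (2*(B₁+B₂+1)) = ε := by
      rw [hθdef]
      field_simp
    have hlt : θ*B₂ + θ*B₁ < ε := by
      have h1 : 0 < θ*B₁ := mul_pos hθ hB₁pos
      have h2 : 0 < θ*B₂ := mul_pos hθ hB₂pos
      have h3 : θ*B₂ + θ*B₁ = θ * (2*(B₁+B₂+1)) - (θ*B₁ + θ*B₂ + 2*θ) := by ring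
      rw [h3, hθval]
      linarith
    calc ‖Ft x - LmapR L x‖ + ‖fderiv ℝ Ft x - LCLM L‖
        ≤ θ*B₂ + θ*B₁ := add_le_add hC0est hC1est
      _ < ε := hlt
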